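/- arXiv:2506.05434 — 2 statements merged into one kernel-verified Lean document; each statement's English description precedes it below -/
import Mathlib

section
/- Let Z_1,...,Z_m be i.i.d. Bernoulli(p) random variables and let S = Z_1 + ... + Z_m. Define p⁺ = max{ q ∈ [0,1] : F_{m,q}(S) ≥ δ }, where F_{m,q} is the CDF of Binomial(m,q). Then P(p ≤ p⁺) ≥ 1 - δ. -/
open MeasureTheory ProbabilityTheory

/-- CDF of the Binomial(m, q) distribution evaluated at `k`. -/
noncomputable def binomCDF (m : ℕ) (q : ℝ) (k : ℕ) : ℝ :=
  ∑ j ∈ Finset.range (k + 1), (m.choose j : ℝ) * q ^ j * (1 - q) ^ (m - j)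

lemma binomCDF_nonneg {m : ℕ} {q : ℝ} (h0 : 0 ≤ q) (h1 : q ≤ 1) (k : ℕ) :
    0 ≤ binomCDF m q k := by
  have h2 : (0:ℝ) ≤ 1 - q := by linarith
  exact Finset.sum_nonneg fun j _ => by positivity

lemma binomCDF_mono {m : ℕ} {q : ℝ} (h0 : 0 ≤ q) (h1 : q ≤ 1) :
    Monotone (binomCDF m q) := by
  have h2 : (0:ℝ) ≤ 1 - q := by linarith
  intro a b hab
  apply Finset.sum_le_sum_of_subset_of_nonneg
  · exact Finset.range_subset_range.mpr (by omega)
  · intro j _ _; positivity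

lemma binomCDF_self (m : ℕ) (q : ℝ) : binomCDF m q m = 1 := by
  have h := add_pow q (1 - q) m
  simp only [add_sub_cancel, one_pow] at h
  rw [binomCDF, show ∑ j ∈ Finset.range (m + 1), (m.choose j : ℝ) * q ^ j * (1 - q) ^ (m - j)
      = ∑ j ∈ Finset.range (m + 1), q ^ j * (1 - q) ^ (m - j) * (m.choose j : ℝ)
      from Finset.sum_congr rfl fun j _ => by ring, ← h]


/-- Clopper–Pearson upper confidence bound: if `Z_1,...,Z_m` are i.i.d. Bernoulli(p) and
`S = Z_1 + ... + Z_m`, then with `p⁺ = max{q ∈ [0,1] : F_{m,q}(S) ≥ δ}` we have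
`P(p ≤ p⁺) ≥ 1 - δ`. -/
theorem stmt_11 {Ω : Type*} [MeasurableSpace Ω]
    (μ : Measure Ω) [IsProbabilityMeasure μ]
    (m : ℕ) (hm : 1 ≤ m) (p δ : ℝ) (hp : p ∈ Set.Icc (0:ℝ) 1) (hδ : δ ∈ Set.Ioo (0:ℝ) 1)
    (Z : Fin m → Ω → ℕ)
    (hmeas : ∀ i, Measurable (Z i))
    (hval : ∀ i ω, Z i ω ≤ 1)
    (hbern : ∀ i, μ {ω | Z i ω = 1} = ENNReal.ofReal p)
    (hindep : iIndepFun Z μ)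
    (S : Ω → ℕ) (hS : ∀ ω, S ω = ∑ i, Z i ω)
    (pPlus : Ω → ℝ)
    (hpPlus : ∀ ω, pPlus ω = sSup {q | q ∈ Set.Icc (0:ℝ) 1 ∧ δ ≤ binomCDF m q (S ω)}) :
    μ {ω | p ≤ pPlus ω} ≥ 1 - ENNReal.ofReal δ := by
  obtain ⟨hp0, hp1⟩ := hp
  obtain ⟨hδ0, hδ1⟩ := hδ
  set q : ENNReal := ENNReal.ofReal p with hqdef
  set r : ENNReal := ENNReal.ofReal (1 - p) with hrdef
  have hq1 : q ≤ 1 := by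
    rw [hqdef, ← ENNReal.ofReal_one]; exact ENNReal.ofReal_le_ofReal hp1
  -- measure of Z i = 0
  have hbern0 : ∀ i, μ {ω | Z i ω = 0} = r := by
    intro i
    have hc : {ω | Z i ω = 0} = {ω | Z i ω = 1}ᶜ := by
      ext ω; simp only [Set.mem_setOf_eq, Set.mem_compl_iff]
      have := hval i ω; omega
    have hms : MeasurableSet {ω | Z i ω = 1} := hmeas i (measurableSet_singleton 1)
    rw [hc, measure_compl hms (measure_ne_top μ _), measure_univ, hbern i,
      hrdef, ENNReal.ofReal_sub _ hp0, ENNReal.ofReal_one]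
  -- the atoms
  set A : Finset (Fin m) → Set Ω :=
    fun s => ⋂ i, Z i ⁻¹' {if i ∈ s then 1 else 0} with hAdef
  have hAmeas : ∀ s, MeasurableSet (A s) :=
    fun s => MeasurableSet.iInter fun i => hmeas i (measurableSet_singleton _)
  have hAμ : ∀ s : Finset (Fin m), μ (A s) = q ^ s.card * r ^ (m - s.card) := by
    intro s
    rw [hAdef]
    rw [hindep.meas_iInter (fun i => ⟨{if i ∈ s then 1 else 0},
        measurableSet_singleton _, rfl⟩)]
    have : ∀ i : Fin m, μ (Z i ⁻¹' {if i ∈ s then 1 else 0})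
        = if i ∈ s then q else r := by
      intro i
      by_cases h : i ∈ s
      · simp only [h, if_true]; exact hbern i
      · simp only [h, if_false]; exact hbern0 i
    rw [Finset.prod_congr rfl fun i _ => this i, Finset.prod_ite, Finset.prod_const,
      Finset.prod_const]
    congr 2
    · simp [Finset.filter_mem_eq_inter]
    · rw [show Finset.filter (fun i => ¬ i ∈ s) Finset.univ = sᶜ by ext i; simp,
        Finset.card_compl]
      simp
  -- the CDF of S
  have key : ∀ j : ℕ, μ {ω | S ω ≤ j} = ENNReal.ofReal (binomCDF m p j) := by
    intro j
    -- decomposition of the event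
    have hset : {ω | S ω ≤ j}
        = ⋃ s ∈ Finset.filter (fun s : Finset (Fin m) => s.card ≤ j) Finset.univ, A s := by
      ext ω
      simp only [Set.mem_setOf_eq, Set.mem_iUnion, Finset.mem_filter, Finset.mem_univ,
        true_and, hAdef, Set.mem_iInter, Set.mem_preimage, Set.mem_singleton_iff]
      have hcard : S ω = (Finset.filter (fun i => Z i ω = 1) Finset.univ).card := by
        rw [hS, Finset.card_filter]
        apply Finset.sum_congr rfl
        intro i _
        have := hval i ω
        by_cases h : Z i ω = 1 <;> simp [h] <;> omega
      constructor
      · intro h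
        refine ⟨Finset.filter (fun i => Z i ω = 1) Finset.univ, by rw [← hcard]; exact h, ?_⟩
        intro i
        have := hval i ω
        by_cases h1 : Z i ω = 1 <;> simp [h1] <;> omega
      · rintro ⟨s, hsc, hs⟩
        have : s = Finset.filter (fun i => Z i ω = 1) Finset.univ := by
          ext i
          simp only [Finset.mem_filter, Finset.mem_univ, true_and]
          have := hs i
          by_cases h : i ∈ s <;> simp [h] at this <;> simp [h, this]
        rw [hcard, ← this]; exact hsc
    rw [hset, measure_biUnion_finset ?_ (fun s _ => hAmeas s)]
    swap
    · intro s hs t ht hst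
      simp only [Function.onFun]
      refine Set.disjoint_left.mpr ?_
      intro ω hωs hωt
      apply hst
      ext i
      have h1 := Set.mem_iInter.mp hωs i
      have h2 := Set.mem_iInter.mp hωt i
      simp only [Set.mem_preimage, Set.mem_singleton_iff] at h1 h2
      by_cases h : i ∈ s <;> by_cases h' : i ∈ t <;> simp [h, h'] at h1 h2 ⊢ <;> omega
    -- now compute the sum
    have hfib := Finset.sum_fiberwise_of_maps_to
      (g := Finset.card) (t := Finset.range (j + 1))
      (s := Finset.filter (fun s : Finset (Fin m) => s.card ≤ j) Finset.univ)
      (f := fun s : Finset (Fin m) => μ (A s))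
      (fun s hs => Finset.mem_range.mpr (by
        have := (Finset.mem_filter.mp hs).2; omega))
    rw [← hfib]
    rw [binomCDF, ENNReal.ofReal_sum_of_nonneg (fun i _ => by
      have h2 : (0:ℝ) ≤ 1 - p := by linarith
      positivity)]
    apply Finset.sum_congr rfl
    intro k hk
    have hk' := Finset.mem_range.mp hk
    have hfilter : Finset.filter (fun s : Finset (Fin m) => s.card = k)
        (Finset.filter (fun s : Finset (Fin m) => s.card ≤ j) Finset.univ)
        = Finset.powersetCard k Finset.univ := by
      rw [Finset.powersetCard_eq_filter, Finset.powerset_univ]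
      ext s
      simp only [Finset.mem_filter, Finset.mem_univ, true_and]
      omega
    rw [hfilter]
    have hconst : ∀ s ∈ Finset.powersetCard k (Finset.univ : Finset (Fin m)),
        μ (A s) = q ^ k * r ^ (m - k) := by
      intro s hs
      rw [hAμ s, (Finset.mem_powersetCard.mp hs).2]
    rw [Finset.sum_congr rfl hconst, Finset.sum_const, Finset.card_powersetCard,
      Finset.card_fin, nsmul_eq_mul]
    rw [ENNReal.ofReal_mul (by positivity), ENNReal.ofReal_mul (by positivity),
      ENNReal.ofReal_natCast, ENNReal.ofReal_pow hp0, ENNReal.ofReal_pow (by linarith)]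
    ring
  -- binomial CDF facts
  have hF1 : binomCDF m p m = 1 := binomCDF_self m p
  have hex : ∃ k, δ ≤ binomCDF m p k := ⟨m, by rw [hF1]; linarith⟩
  set k0 := Nat.find hex with hk0
  have hk0spec : δ ≤ binomCDF m p k0 := Nat.find_spec hex
  -- inclusion of events
  have hsub : {ω | k0 ≤ S ω} ⊆ {ω | p ≤ pPlus ω} := by
    intro ω hω
    simp only [Set.mem_setOf_eq] at hω ⊢
    have hF : δ ≤ binomCDF m p (S ω) :=
      le_trans hk0spec (binomCDF_mono hp0 hp1 hω)
    rw [hpPlus ω]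
    apply le_csSup
    · exact ⟨1, fun x hx => hx.1.2⟩
    · exact ⟨⟨hp0, hp1⟩, hF⟩
  refine le_trans ?_ (measure_mono hsub)
  -- lower bound for μ {k0 ≤ S}
  have hSmeas : Measurable S := by
    have : S = fun ω => ∑ i, Z i ω := funext hS
    rw [this]
    exact Finset.measurable_sum _ fun i _ => hmeas i
  rcases Nat.eq_zero_or_pos k0 with h0 | hpos
  · have : {ω | k0 ≤ S ω} = Set.univ := by
      ext ω; simp [h0]
    rw [this, measure_univ]
    exact tsub_le_self.trans le_rfl
  · obtain ⟨n, hn⟩ : ∃ n, k0 = n + 1 := ⟨k0 - 1, by omega⟩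
    have hlt : binomCDF m p n < δ := by
      by_contra h
      exact absurd (Nat.find_min' hex (not_lt.mp h)) (by omega)
    have hcs : {ω | k0 ≤ S ω} = {ω | S ω ≤ n}ᶜ := by
      ext ω; simp only [Set.mem_setOf_eq, Set.mem_compl_iff, not_le]; omega
    have hmsn : MeasurableSet {ω | S ω ≤ n} := by
      exact hSmeas measurableSet_Iic
    rw [hcs, measure_compl hmsn (measure_ne_top μ _), measure_univ, key n]
    exact tsub_le_tsub_left (ENNReal.ofReal_le_ofReal hlt.le) 1
end

section
/- Monotone sigmoid bound for conservative scores: if |f(x̃)_y - f(x)_y| ≤ L·ε for all x in the ε-ball around x̃, then 1 - sigmoid((f(x̃)_y + L·ε - b)/T) ≤ inf over x in the ball of [1 - sigmoid((f(x)_y - b)/T)], and this bound is at least as tight as the generic Lipschitz bound s(x̃,y) - (L/(4T))·ε. -/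
noncomputable def sigmoid (t : ℝ) : ℝ := 1 / (1 + Real.exp (-t))

lemma sigmoid_hasDerivAt (t : ℝ) :
    HasDerivAt sigmoid (Real.exp (-t) / (1 + Real.exp (-t)) ^ 2) t := by
  have h0 : (0:ℝ) < 1 + Real.exp (-t) := by positivity
  have h1 : HasDerivAt (fun x : ℝ => 1 + Real.exp (-x)) (-Real.exp (-t)) t := by
    simpa using ((hasDerivAt_neg t).exp).const_add 1
  have h2 := h1.inv h0.ne'
  unfold sigmoid
  simpa [one_div, neg_div, neg_neg, Pi.inv_def] using h2

lemma sigmoid_lips : LipschitzWith (1/4 : NNReal) sigmoid := by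
  apply lipschitzWith_of_nnnorm_deriv_le (fun x => (sigmoid_hasDerivAt x).differentiableAt)
  intro x
  rw [(sigmoid_hasDerivAt x).deriv, ← NNReal.coe_le_coe]
  have h0 : (0:ℝ) < 1 + Real.exp (-x) := by positivity
  have hx : (0:ℝ) < Real.exp (-x) := Real.exp_pos _
  have : ‖Real.exp (-x) / (1 + Real.exp (-x)) ^ 2‖ = Real.exp (-x) / (1 + Real.exp (-x)) ^ 2 := by
    rw [Real.norm_eq_abs, abs_of_nonneg]; positivity
  push_cast
  rw [this]
  rw [div_le_iff₀ (by positivity)]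
  nlinarith [sq_nonneg (1 - Real.exp (-x))]

lemma sigmoid_mono : Monotone sigmoid := by
  intro u v huv
  unfold sigmoid
  have h0 : (0:ℝ) < 1 + Real.exp (-v) := by positivity
  apply one_div_le_one_div_of_le h0
  have := Real.exp_le_exp.mpr (neg_le_neg huv)
  linarith

lemma sigmoid_sub_le {u v : ℝ} (h : v ≤ u) : sigmoid u - sigmoid v ≤ (u - v) / 4 := by
  have h1 := sigmoid_lips.dist_le_mul u v
  rw [Real.dist_eq, Real.dist_eq] at h1
  have h2 : sigmoid u - sigmoid v ≤ |sigmoid u - sigmoid v| := le_abs_self _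
  have h3 : |u - v| = u - v := abs_of_nonneg (by linarith)
  push_cast at h1
  rw [h3] at h1
  linarith

/-- Monotone sigmoid bound for conservative scores: (i) if the selected logit
`g x = f(x)_y` varies by at most `L·ε` on the ε-ball around `x̃`, then
`1 - sigmoid((g(x̃) + L·ε - b)/T)` lower-bounds the infimum of the sigmoid LAC score over
the ball; (ii) this monotone bound dominates the generic Lipschitz bound:
`1 - sigmoid((t + a - b)/T) ≥ (1 - sigmoid((t - b)/T)) - a/(4T)` for all `t` and `a ≥ 0`. -/
theorem stmt_19 {d : ℕ}
    (X : Set (EuclideanSpace ℝ (Fin d)))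
    (T b L ε : ℝ) (hT : 0 < T) (hL : 0 ≤ L) (hε : 0 ≤ ε)
    (g : EuclideanSpace ℝ (Fin d) → ℝ)  -- the selected logit x ↦ f(x)_y
    (xt : EuclideanSpace ℝ (Fin d)) (hxt : xt ∈ X)
    (B : Set (EuclideanSpace ℝ (Fin d)))
    (hB : B = {x | x ∈ X ∧ ‖x - xt‖ ≤ ε})
    (hg : ∀ x ∈ B, |g x - g xt| ≤ L * ε) :
    (1 - sigmoid ((g xt + L * ε - b) / T) ≤
        sInf ((fun x => 1 - sigmoid ((g x - b) / T)) '' B)) ∧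
    (∀ t a : ℝ, 0 ≤ a →
        1 - sigmoid ((t + a - b) / T) ≥ (1 - sigmoid ((t - b) / T)) - a / (4 * T)) := by
  constructor
  · have hxtB : xt ∈ B := by
      rw [hB]; exact ⟨hxt, by simpa using hε⟩
    apply le_csInf ⟨_, Set.mem_image_of_mem _ hxtB⟩
    rintro y ⟨x, hxB, rfl⟩
    have hgx : g x ≤ g xt + L * ε := by
      have := (abs_le.mp (hg x hxB)).2; linarith
    have : sigmoid ((g x - b) / T) ≤ sigmoid ((g xt + L * ε - b) / T) := by
      apply sigmoid_mono
      gcongr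
    linarith [this]
  · intro t a ha
    have h1 : (t - b) / T ≤ (t + a - b) / T := (div_le_div_iff_of_pos_right hT).mpr (by linarith)
    have h2 := sigmoid_sub_le h1
    have h3 : ((t + a - b) / T - (t - b) / T) / 4 = a / (4 * T) := by
      ring
    rw [h3] at h2
    linarith
end
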